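/- arXiv:1101.4038 — 2 statements merged into one kernel-verified Lean document; each statement's English description precedes it below -/
import Mathlib

section
/- Let b > 0 and let y = (y_1, y_2, y_3, y_4) ∈ ℕ⁴ with y_1 - y_3 = b, and set n = y_1 + y_2 + y_3 + y_4. With k(y) the number of lattice paths from the origin to y all of whose points except y satisfy x_1 - x_3 < b, and k_1*(y) the number of such paths starting from e_1 = (1,0,0,0), the identity b · (n-1) · k_1*(y) = (b-1) · y_1 · k(y) holds; equivalently, k_1*(y)/k(y) = ((b-1)/b) · y_1/(n-1). -/
open scoped Classical

/-- Number of lattice paths from `a` to `x`, each step adding one standard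
basis vector, all of whose points (including the endpoints) lie in `A`. -/
noncomputable def pathCount {k : ℕ} (A : Set (Fin k → ℕ)) (a : Fin k → ℕ)
    (x : Fin k → ℕ) : ℕ :=
  if x = a then (if a ∈ A then 1 else 0)
  else if x ∈ A then
    ∑ i : Fin k, if h : 0 < x i then pathCount A a (Function.update x i (x i - 1)) else 0
  else 0
termination_by ∑ i, x i
decreasing_by
  have h1 := Finset.sum_update_of_mem (Finset.mem_univ i) x (x i - 1)
  have h2 := Finset.sum_eq_sum_sdiff_singleton_add (Finset.mem_univ i) x
  omega

/-- Number of lattice paths from `a` to `y` all of whose points except `y`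
lie in `R`. -/
noncomputable def exitCount {k : ℕ} (R : Set (Fin k → ℕ)) (a y : Fin k → ℕ) : ℕ :=
  pathCount (insert y R) a y

lemma sum_update_pred {k : ℕ} (x : Fin k → ℕ) (i : Fin k) (h : 0 < x i) :
    (∑ j, Function.update x i (x i - 1) j) < ∑ j, x j := by
  have h1 := Finset.sum_update_of_mem (Finset.mem_univ i) x (x i - 1)
  have h2 := Finset.sum_eq_sum_sdiff_singleton_add (Finset.mem_univ i) x
  omega


lemma pathCount_start_not_mem {k : ℕ} {A : Set (Fin k → ℕ)} {a : Fin k → ℕ} (hA : a ∉ A) :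
    ∀ x, pathCount A a x = 0 := by
  suffices H : ∀ n x, (∑ j, x j) = n → pathCount A a x = 0 from fun x => H _ x rfl
  intro n
  induction n using Nat.strong_induction_on with
  | _ n IH =>
    intro x hx
    rw [pathCount]
    split
    · simp [hA]
    · split
      · apply Finset.sum_eq_zero
        intro i _
        split
        · exact IH _ (hx ▸ sum_update_pred x i ‹_›) _ rfl
        · rfl
      · rfl

lemma pathCount_target_not_mem {k : ℕ} {A : Set (Fin k → ℕ)} {a x : Fin k → ℕ} (hx : x ∉ A) :
    pathCount A a x = 0 := by
  rw [pathCount]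
  split_ifs with h1 h2 <;> try rfl
  exact absurd (h1 ▸ h2) hx


lemma pathCount_start_lt {k : ℕ} {A : Set (Fin k → ℕ)} {a : Fin k → ℕ} (i : Fin k) :
    ∀ x, x i < a i → pathCount A a x = 0 := by
  suffices H : ∀ n x, (∑ j, x j) = n → x i < a i → pathCount A a x = 0 from
    fun x h => H _ x rfl h
  intro n
  induction n using Nat.strong_induction_on with
  | _ n IH =>
    intro x hx hlt
    rw [pathCount]
    split
    · rename_i h; rw [h] at hlt; omega
    · split
      · apply Finset.sum_eq_zero
        intro j _
        split
        · refine IH _ (hx ▸ sum_update_pred x j ‹_›) _ rfl ?_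
          rcases eq_or_ne i j with rfl | hne
          · rw [Function.update_self]; omega
          · rw [Function.update_of_ne hne]; exact hlt
        · rfl
      · rfl


lemma pathCount_congr {k : ℕ} {A B : Set (Fin k → ℕ)} (a : Fin k → ℕ) :
    ∀ x, (∀ w : Fin k → ℕ, (∑ j, w j) ≤ ∑ j, x j → (w ∈ A ↔ w ∈ B)) →
      pathCount A a x = pathCount B a x := by
  suffices H : ∀ n x, (∑ j, x j) = n →
      (∀ w : Fin k → ℕ, (∑ j, w j) ≤ ∑ j, x j → (w ∈ A ↔ w ∈ B)) →
      pathCount A a x = pathCount B a x from fun x h => H _ x rfl h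
  intro n
  induction n using Nat.strong_induction_on with
  | _ n IH =>
    intro x hx hAB
    rw [pathCount, pathCount]
    split
    · rename_i h
      subst h
      by_cases hm : x ∈ A
      · rw [if_pos hm, if_pos ((hAB x le_rfl).mp hm)]
      · rw [if_neg hm, if_neg (fun hc => hm ((hAB x le_rfl).mpr hc))]
    · by_cases hm : x ∈ A
      · rw [if_pos hm, if_pos ((hAB x le_rfl).mp hm)]
        apply Finset.sum_congr rfl
        intro j _
        split
        · refine IH _ (hx ▸ sum_update_pred x j ‹_›) _ rfl ?_
          intro w hw
          exact hAB w (le_trans hw (le_of_lt (sum_update_pred x j ‹_›)))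
        · rfl
      · rw [if_neg hm, if_neg (fun hc => hm ((hAB x le_rfl).mpr hc))]


lemma pathCount_insert {k : ℕ} {R : Set (Fin k → ℕ)} (a y x : Fin k → ℕ)
    (hxy : (∑ j, x j) < ∑ j, y j) :
    pathCount (insert y R) a x = pathCount R a x := by
  apply pathCount_congr
  intro w hw
  rw [Set.mem_insert_iff]
  constructor
  · rintro (rfl | h)
    · omega
    · exact h
  · exact Or.inr

noncomputable def M4 (a b c d : ℕ) : ℕ := Nat.multinomial Finset.univ ![a, b, c, d]

lemma M4_mul (a b c d : ℕ) :
    M4 a b c d * (a.factorial * b.factorial * c.factorial * d.factorial)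
      = (a + b + c + d).factorial := by
  have := Nat.multinomial_spec (Finset.univ : Finset (Fin 4)) ![a, b, c, d]
  simp only [Fin.prod_univ_four, Fin.sum_univ_four, Matrix.cons_val_zero, Matrix.cons_val_one,
    Matrix.head_cons, Matrix.cons_val_two, Matrix.tail_cons, Matrix.cons_val_three,
    Matrix.head_fin_const] at this
  rw [mul_comm] at this
  convert this using 2
  rfl

lemma M4_zero : M4 0 0 0 0 = 1 := by
  have := M4_mul 0 0 0 0
  simpa using this

lemma pascal4 {a b c d : ℕ} (h : a + b + c + d ≠ 0) :
    M4 a b c d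
      = (if 0 < a then M4 (a - 1) b c d else 0) + (if 0 < b then M4 a (b - 1) c d else 0)
        + (if 0 < c then M4 a b (c - 1) d else 0) + (if 0 < d then M4 a b c (d - 1) else 0) := by
  have hP : 0 < a.factorial * b.factorial * c.factorial * d.factorial := by positivity
  apply Nat.eq_of_mul_eq_mul_right hP
  have ta : (if 0 < a then M4 (a - 1) b c d else 0)
      * (a.factorial * b.factorial * c.factorial * d.factorial)
      = a * ((a + b + c + d) - 1).factorial := by
    split_ifs with h'
    · have key := M4_mul (a - 1) b c d
      have ha' : a.factorial = a * (a - 1).factorial := (Nat.mul_factorial_pred h'.ne').symm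
      calc M4 (a - 1) b c d * (a.factorial * b.factorial * c.factorial * d.factorial)
          = a * (M4 (a - 1) b c d
            * ((a - 1).factorial * b.factorial * c.factorial * d.factorial)) := by
            rw [ha']; ring
        _ = a * ((a - 1) + b + c + d).factorial := by rw [key]
        _ = a * ((a + b + c + d) - 1).factorial := by
            rw [show (a - 1) + b + c + d = (a + b + c + d) - 1 by omega]
    · have : a = 0 := by omega
      subst this; simp
  have tb : (if 0 < b then M4 a (b - 1) c d else 0)
      * (a.factorial * b.factorial * c.factorial * d.factorial)
      = b * ((a + b + c + d) - 1).factorial := by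
    split_ifs with h'
    · have key := M4_mul a (b - 1) c d
      have hb' : b.factorial = b * (b - 1).factorial := (Nat.mul_factorial_pred h'.ne').symm
      calc M4 a (b - 1) c d * (a.factorial * b.factorial * c.factorial * d.factorial)
          = b * (M4 a (b - 1) c d
            * (a.factorial * (b - 1).factorial * c.factorial * d.factorial)) := by
            rw [hb']; ring
        _ = b * (a + (b - 1) + c + d).factorial := by rw [key]
        _ = b * ((a + b + c + d) - 1).factorial := by
            rw [show a + (b - 1) + c + d = (a + b + c + d) - 1 by omega]
    · have : b = 0 := by omega
      subst this; simp
  have tc : (if 0 < c then M4 a b (c - 1) d else 0)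
      * (a.factorial * b.factorial * c.factorial * d.factorial)
      = c * ((a + b + c + d) - 1).factorial := by
    split_ifs with h'
    · have key := M4_mul a b (c - 1) d
      have hc' : c.factorial = c * (c - 1).factorial := (Nat.mul_factorial_pred h'.ne').symm
      calc M4 a b (c - 1) d * (a.factorial * b.factorial * c.factorial * d.factorial)
          = c * (M4 a b (c - 1) d
            * (a.factorial * b.factorial * (c - 1).factorial * d.factorial)) := by
            rw [hc']; ring
        _ = c * (a + b + (c - 1) + d).factorial := by rw [key]
        _ = c * ((a + b + c + d) - 1).factorial := by
            rw [show a + b + (c - 1) + d = (a + b + c + d) - 1 by omega]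
    · have : c = 0 := by omega
      subst this; simp
  have td : (if 0 < d then M4 a b c (d - 1) else 0)
      * (a.factorial * b.factorial * c.factorial * d.factorial)
      = d * ((a + b + c + d) - 1).factorial := by
    split_ifs with h'
    · have key := M4_mul a b c (d - 1)
      have hd' : d.factorial = d * (d - 1).factorial := (Nat.mul_factorial_pred h'.ne').symm
      calc M4 a b c (d - 1) * (a.factorial * b.factorial * c.factorial * d.factorial)
          = d * (M4 a b c (d - 1)
            * (a.factorial * b.factorial * c.factorial * (d - 1).factorial)) := by
            rw [hd']; ring
        _ = d * (a + b + c + (d - 1)).factorial := by rw [key]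
        _ = d * ((a + b + c + d) - 1).factorial := by
            rw [show a + b + c + (d - 1) = (a + b + c + d) - 1 by omega]
    · have : d = 0 := by omega
      subst this; simp
  rw [M4_mul, add_mul, add_mul, add_mul, ta, tb, tc, td,
    ← Nat.mul_factorial_pred (show a + b + c + d ≠ 0 by omega)]
  ring

lemma absorb0 {a b c d : ℕ} (h : 0 < a) :
    (a + b + c + d) * M4 (a - 1) b c d = a * M4 a b c d := by
  have hP : 0 < (a - 1).factorial * b.factorial * c.factorial * d.factorial := by positivity
  apply Nat.eq_of_mul_eq_mul_right hP
  have k1 := M4_mul (a - 1) b c d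
  have k2 := M4_mul a b c d
  calc (a + b + c + d) * M4 (a - 1) b c d
        * ((a - 1).factorial * b.factorial * c.factorial * d.factorial)
      = (a + b + c + d) * ((a - 1) + b + c + d).factorial := by rw [mul_assoc, k1]
    _ = (a + b + c + d).factorial := by
        rw [show a + b + c + d = ((a - 1) + b + c + d) + 1 by omega, Nat.factorial_succ]
    _ = a * M4 a b c d * ((a - 1).factorial * b.factorial * c.factorial * d.factorial) := by
        rw [← k2, ← Nat.mul_factorial_pred h.ne']; ring

lemma absorb2 {a b c d : ℕ} (h : 0 < c) :
    (a + b + c + d) * M4 a b (c - 1) d = c * M4 a b c d := by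
  have hP : 0 < a.factorial * b.factorial * (c - 1).factorial * d.factorial := by positivity
  apply Nat.eq_of_mul_eq_mul_right hP
  have k1 := M4_mul a b (c - 1) d
  have k2 := M4_mul a b c d
  calc (a + b + c + d) * M4 a b (c - 1) d
        * (a.factorial * b.factorial * (c - 1).factorial * d.factorial)
      = (a + b + c + d) * (a + b + (c - 1) + d).factorial := by rw [mul_assoc, k1]
    _ = (a + b + c + d).factorial := by
        rw [show a + b + c + d = (a + b + (c - 1) + d) + 1 by omega, Nat.factorial_succ]
    _ = c * M4 a b c d * (a.factorial * b.factorial * (c - 1).factorial * d.factorial) := by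
        rw [← k2, ← Nat.mul_factorial_pred h.ne']; ring

theorem mainCount (t s : ℕ) (hst : s < t) :
    ∀ z : Fin 4 → ℕ, (z 0 : ℤ) - (z 2 : ℤ) ≤ (t : ℤ) →
      pathCount {x : Fin 4 → ℕ | (x 0 : ℤ) - (x 2 : ℤ) < (t : ℤ)} (Pi.single 0 s) z
          + (if t ≤ z 0 then M4 (z 2 + (t - s)) (z 1) (z 0 - t) (z 3) else 0)
        = (if s ≤ z 0 then M4 (z 0 - s) (z 1) (z 2) (z 3) else 0) := by
  suffices H : ∀ N, ∀ z : Fin 4 → ℕ, (∑ j, z j) = N → (z 0 : ℤ) - (z 2 : ℤ) ≤ (t : ℤ) →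
      pathCount {x : Fin 4 → ℕ | (x 0 : ℤ) - (x 2 : ℤ) < (t : ℤ)} (Pi.single 0 s) z
          + (if t ≤ z 0 then M4 (z 2 + (t - s)) (z 1) (z 0 - t) (z 3) else 0)
        = (if s ≤ z 0 then M4 (z 0 - s) (z 1) (z 2) (z 3) else 0) from
    fun z hz => H _ z rfl hz
  intro N
  induction N using Nat.strong_induction_on with
  | _ N IH =>
  intro z hN hz
  have hs0 : (Pi.single 0 s : Fin 4 → ℕ) 0 = s := Pi.single_eq_same _ _
  have hs2 : (Pi.single 0 s : Fin 4 → ℕ) 2 = 0 := Pi.single_eq_of_ne (by decide) _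
  by_cases hza : z = Pi.single 0 s
  · subst hza
    have hmem : (Pi.single 0 s : Fin 4 → ℕ) ∈
        {x : Fin 4 → ℕ | (x 0 : ℤ) - (x 2 : ℤ) < (t : ℤ)} := by
      simp only [Set.mem_setOf_eq, hs0, hs2]
      omega
    rw [pathCount, if_pos rfl, if_pos hmem, hs0, hs2,
      Pi.single_eq_of_ne (show (1 : Fin 4) ≠ 0 by decide),
      Pi.single_eq_of_ne (show (3 : Fin 4) ≠ 0 by decide),
      if_neg (by omega), if_pos le_rfl, show s - s = 0 by omega, M4_zero]
  · by_cases hbd : (z 0 : ℤ) - (z 2 : ℤ) = (t : ℤ)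
    · have h0 : z 0 = z 2 + t := by omega
      rw [pathCount_target_not_mem (show z ∉ _ from by simp only [Set.mem_setOf_eq]; omega),
        if_pos (by omega), if_pos (by omega), zero_add,
        show z 2 + (t - s) = z 0 - s by omega, show z 0 - t = z 2 by omega]
    · have hlt : (z 0 : ℤ) - (z 2 : ℤ) < (t : ℤ) := lt_of_le_of_ne hz hbd
      by_cases hzs : z 0 < s
      · rw [pathCount_start_lt 0 z (by rw [hs0]; exact hzs),
          if_neg (by omega), if_neg (by omega)]
      · have hs0z : s ≤ z 0 := not_lt.mp hzs
        have hzR : z ∈ {x : Fin 4 → ℕ | (x 0 : ℤ) - (x 2 : ℤ) < (t : ℤ)} := hlt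
        rw [pathCount, if_neg hza, if_pos hzR, Fin.sum_univ_four]
        have hM : (if s ≤ z 0 then M4 (z 0 - s) (z 1) (z 2) (z 3) else 0)
            = (if 0 < z 0 ∧ s ≤ z 0 - 1 then M4 (z 0 - 1 - s) (z 1) (z 2) (z 3) else 0)
            + (if 0 < z 1 ∧ s ≤ z 0 then M4 (z 0 - s) (z 1 - 1) (z 2) (z 3) else 0)
            + (if 0 < z 2 ∧ s ≤ z 0 then M4 (z 0 - s) (z 1) (z 2 - 1) (z 3) else 0)
            + (if 0 < z 3 ∧ s ≤ z 0 then M4 (z 0 - s) (z 1) (z 2) (z 3 - 1) else 0) := by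
          have hne : (z 0 - s) + z 1 + z 2 + z 3 ≠ 0 := by
            intro h0
            apply hza
            funext j
            fin_cases j <;> simp [Pi.single_apply] <;> omega
          have c0 : (if 0 < z 0 - s then M4 (z 0 - s - 1) (z 1) (z 2) (z 3) else 0)
              = (if 0 < z 0 ∧ s ≤ z 0 - 1 then M4 (z 0 - 1 - s) (z 1) (z 2) (z 3) else 0) := by
            rw [show z 0 - s - 1 = z 0 - 1 - s by omega]
            exact if_congr (by omega) rfl rfl
          have c1 : (if 0 < z 1 then M4 (z 0 - s) (z 1 - 1) (z 2) (z 3) else 0)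
              = (if 0 < z 1 ∧ s ≤ z 0 then M4 (z 0 - s) (z 1 - 1) (z 2) (z 3) else 0) :=
            if_congr (by omega) rfl rfl
          have c2 : (if 0 < z 2 then M4 (z 0 - s) (z 1) (z 2 - 1) (z 3) else 0)
              = (if 0 < z 2 ∧ s ≤ z 0 then M4 (z 0 - s) (z 1) (z 2 - 1) (z 3) else 0) :=
            if_congr (by omega) rfl rfl
          have c3 : (if 0 < z 3 then M4 (z 0 - s) (z 1) (z 2) (z 3 - 1) else 0)
              = (if 0 < z 3 ∧ s ≤ z 0 then M4 (z 0 - s) (z 1) (z 2) (z 3 - 1) else 0) :=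
            if_congr (by omega) rfl rfl
          rw [if_pos hs0z, pascal4 hne, c0, c1, c2, c3]
        have hRt : (if t ≤ z 0 then M4 (z 2 + (t - s)) (z 1) (z 0 - t) (z 3) else 0)
            = (if 0 < z 0 ∧ t ≤ z 0 - 1 then M4 (z 2 + (t - s)) (z 1) (z 0 - 1 - t) (z 3) else 0)
            + (if 0 < z 1 ∧ t ≤ z 0 then M4 (z 2 + (t - s)) (z 1 - 1) (z 0 - t) (z 3) else 0)
            + (if 0 < z 2 ∧ t ≤ z 0 then M4 ((z 2 - 1) + (t - s)) (z 1) (z 0 - t) (z 3) else 0)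
            + (if 0 < z 3 ∧ t ≤ z 0 then M4 (z 2 + (t - s)) (z 1) (z 0 - t) (z 3 - 1) else 0) := by
          by_cases ht0 : t ≤ z 0
          · have hz2 : 0 < z 2 := by omega
            have c0 : (if 0 < z 0 - t then M4 (z 2 + (t - s)) (z 1) (z 0 - t - 1) (z 3) else 0)
                = (if 0 < z 0 ∧ t ≤ z 0 - 1 then
                    M4 (z 2 + (t - s)) (z 1) (z 0 - 1 - t) (z 3) else 0) := by
              rw [show z 0 - t - 1 = z 0 - 1 - t by omega]
              exact if_congr (by omega) rfl rfl
            have c1 : (if 0 < z 1 then M4 (z 2 + (t - s)) (z 1 - 1) (z 0 - t) (z 3) else 0)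
                = (if 0 < z 1 ∧ t ≤ z 0 then
                    M4 (z 2 + (t - s)) (z 1 - 1) (z 0 - t) (z 3) else 0) :=
              if_congr (by omega) rfl rfl
            have c2 : (if 0 < z 2 + (t - s) then
                  M4 (z 2 + (t - s) - 1) (z 1) (z 0 - t) (z 3) else 0)
                = (if 0 < z 2 ∧ t ≤ z 0 then
                    M4 ((z 2 - 1) + (t - s)) (z 1) (z 0 - t) (z 3) else 0) := by
              rw [show z 2 + (t - s) - 1 = (z 2 - 1) + (t - s) by omega]
              exact if_congr (by omega) rfl rfl
            have c3 : (if 0 < z 3 then M4 (z 2 + (t - s)) (z 1) (z 0 - t) (z 3 - 1) else 0)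
                = (if 0 < z 3 ∧ t ≤ z 0 then
                    M4 (z 2 + (t - s)) (z 1) (z 0 - t) (z 3 - 1) else 0) :=
              if_congr (by omega) rfl rfl
            rw [if_pos ht0,
              pascal4 (show (z 2 + (t - s)) + z 1 + (z 0 - t) + z 3 ≠ 0 by omega),
              c0, c1, c2, c3]
            ring
          · rw [if_neg ht0, if_neg (show ¬(0 < z 0 ∧ t ≤ z 0 - 1) by omega),
              if_neg (show ¬(0 < z 1 ∧ t ≤ z 0) by omega),
              if_neg (show ¬(0 < z 2 ∧ t ≤ z 0) by omega),
              if_neg (show ¬(0 < z 3 ∧ t ≤ z 0) by omega)]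
        have e0 : (if h : 0 < z 0 then
              pathCount {x : Fin 4 → ℕ | (x 0 : ℤ) - (x 2 : ℤ) < (t : ℤ)} (Pi.single 0 s)
                (Function.update z 0 (z 0 - 1)) else 0)
            + (if 0 < z 0 ∧ t ≤ z 0 - 1 then M4 (z 2 + (t - s)) (z 1) (z 0 - 1 - t) (z 3) else 0)
            = (if 0 < z 0 ∧ s ≤ z 0 - 1 then M4 (z 0 - 1 - s) (z 1) (z 2) (z 3) else 0) := by
          by_cases h : 0 < z 0
          · rw [dif_pos h]
            have hu0 : Function.update z 0 (z 0 - 1) 0 = z 0 - 1 := Function.update_self _ _ _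
            have hu1 : Function.update z 0 (z 0 - 1) 1 = z 1 :=
              Function.update_of_ne (by decide) _ _
            have hu2 : Function.update z 0 (z 0 - 1) 2 = z 2 :=
              Function.update_of_ne (by decide) _ _
            have hu3 : Function.update z 0 (z 0 - 1) 3 = z 3 :=
              Function.update_of_ne (by decide) _ _
            have hIH := IH _ (hN ▸ sum_update_pred z 0 h) (Function.update z 0 (z 0 - 1)) rfl
              (by rw [hu0, hu2]; clear hM hRt; omega)
            rw [hu0, hu1, hu2, hu3] at hIH
            rw [if_congr (and_iff_right h) rfl rfl, if_congr (and_iff_right h) rfl rfl]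
            exact hIH
          · rw [dif_neg h, if_neg (fun hc => h hc.1), if_neg (fun hc => h hc.1)]
        have e1 : (if h : 0 < z 1 then
              pathCount {x : Fin 4 → ℕ | (x 0 : ℤ) - (x 2 : ℤ) < (t : ℤ)} (Pi.single 0 s)
                (Function.update z 1 (z 1 - 1)) else 0)
            + (if 0 < z 1 ∧ t ≤ z 0 then M4 (z 2 + (t - s)) (z 1 - 1) (z 0 - t) (z 3) else 0)
            = (if 0 < z 1 ∧ s ≤ z 0 then M4 (z 0 - s) (z 1 - 1) (z 2) (z 3) else 0) := by
          by_cases h : 0 < z 1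
          · rw [dif_pos h]
            have hu0 : Function.update z 1 (z 1 - 1) 0 = z 0 :=
              Function.update_of_ne (by decide) _ _
            have hu1 : Function.update z 1 (z 1 - 1) 1 = z 1 - 1 := Function.update_self _ _ _
            have hu2 : Function.update z 1 (z 1 - 1) 2 = z 2 :=
              Function.update_of_ne (by decide) _ _
            have hu3 : Function.update z 1 (z 1 - 1) 3 = z 3 :=
              Function.update_of_ne (by decide) _ _
            have hIH := IH _ (hN ▸ sum_update_pred z 1 h) (Function.update z 1 (z 1 - 1)) rfl
              (by rw [hu0, hu2]; clear e0 hM hRt; omega)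
            rw [hu0, hu1, hu2, hu3] at hIH
            rw [if_congr (and_iff_right h) rfl rfl, if_congr (and_iff_right h) rfl rfl]
            exact hIH
          · rw [dif_neg h, if_neg (fun hc => h hc.1), if_neg (fun hc => h hc.1)]
        have e2 : (if h : 0 < z 2 then
              pathCount {x : Fin 4 → ℕ | (x 0 : ℤ) - (x 2 : ℤ) < (t : ℤ)} (Pi.single 0 s)
                (Function.update z 2 (z 2 - 1)) else 0)
            + (if 0 < z 2 ∧ t ≤ z 0 then M4 ((z 2 - 1) + (t - s)) (z 1) (z 0 - t) (z 3) else 0)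
            = (if 0 < z 2 ∧ s ≤ z 0 then M4 (z 0 - s) (z 1) (z 2 - 1) (z 3) else 0) := by
          by_cases h : 0 < z 2
          · rw [dif_pos h]
            have hu0 : Function.update z 2 (z 2 - 1) 0 = z 0 :=
              Function.update_of_ne (by decide) _ _
            have hu1 : Function.update z 2 (z 2 - 1) 1 = z 1 :=
              Function.update_of_ne (by decide) _ _
            have hu2 : Function.update z 2 (z 2 - 1) 2 = z 2 - 1 := Function.update_self _ _ _
            have hu3 : Function.update z 2 (z 2 - 1) 3 = z 3 :=
              Function.update_of_ne (by decide) _ _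
            have hIH := IH _ (hN ▸ sum_update_pred z 2 h) (Function.update z 2 (z 2 - 1)) rfl
              (by rw [hu0, hu2]; clear e0 e1 hM hRt; omega)
            rw [hu0, hu1, hu2, hu3] at hIH
            rw [if_congr (and_iff_right h) rfl rfl, if_congr (and_iff_right h) rfl rfl]
            exact hIH
          · rw [dif_neg h, if_neg (fun hc => h hc.1), if_neg (fun hc => h hc.1)]
        have e3 : (if h : 0 < z 3 then
              pathCount {x : Fin 4 → ℕ | (x 0 : ℤ) - (x 2 : ℤ) < (t : ℤ)} (Pi.single 0 s)
                (Function.update z 3 (z 3 - 1)) else 0)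
            + (if 0 < z 3 ∧ t ≤ z 0 then M4 (z 2 + (t - s)) (z 1) (z 0 - t) (z 3 - 1) else 0)
            = (if 0 < z 3 ∧ s ≤ z 0 then M4 (z 0 - s) (z 1) (z 2) (z 3 - 1) else 0) := by
          by_cases h : 0 < z 3
          · rw [dif_pos h]
            have hu0 : Function.update z 3 (z 3 - 1) 0 = z 0 :=
              Function.update_of_ne (by decide) _ _
            have hu1 : Function.update z 3 (z 3 - 1) 1 = z 1 :=
              Function.update_of_ne (by decide) _ _
            have hu2 : Function.update z 3 (z 3 - 1) 2 = z 2 :=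
              Function.update_of_ne (by decide) _ _
            have hu3 : Function.update z 3 (z 3 - 1) 3 = z 3 - 1 := Function.update_self _ _ _
            have hIH := IH _ (hN ▸ sum_update_pred z 3 h) (Function.update z 3 (z 3 - 1)) rfl
              (by rw [hu0, hu2]; clear e0 e1 e2 hM hRt; omega)
            rw [hu0, hu1, hu2, hu3] at hIH
            rw [if_congr (and_iff_right h) rfl rfl, if_congr (and_iff_right h) rfl rfl]
            exact hIH
          · rw [dif_neg h, if_neg (fun hc => h hc.1), if_neg (fun hc => h hc.1)]
        rw [hM, hRt, ← e0, ← e1, ← e2, ← e3]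
        ring

lemma exit_formula (t s : ℕ) (hst : s < t) (y : Fin 4 → ℕ) (hy0 : y 0 = y 2 + t)
    (hs1 : s ≤ y 0 - 1) :
    exitCount {x : Fin 4 → ℕ | (x 0 : ℤ) - (x 2 : ℤ) < (t : ℤ)} (Pi.single 0 s) y
        + (if t ≤ y 0 - 1 then M4 (y 2 + (t - s)) (y 1) (y 0 - 1 - t) (y 3) else 0)
      = M4 (y 0 - 1 - s) (y 1) (y 2) (y 3) := by
  have hy00 : 0 < y 0 := by omega
  have hyne : y ≠ Pi.single 0 s := by
    intro h
    have := congrFun h 0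
    rw [Pi.single_eq_same] at this
    omega
  rw [exitCount, pathCount, if_neg hyne, if_pos (Set.mem_insert _ _), Fin.sum_univ_four]
  have z1 : (if h : 0 < y 1 then
      pathCount (insert y {x : Fin 4 → ℕ | (x 0 : ℤ) - (x 2 : ℤ) < (t : ℤ)}) (Pi.single 0 s)
        (Function.update y 1 (y 1 - 1)) else 0) = 0 := by
    split_ifs with h
    · apply pathCount_target_not_mem
      intro hmem
      rcases Set.mem_insert_iff.mp hmem with heq | hR
      · have := congrFun heq 1
        rw [Function.update_self] at this
        omega
      · rw [Set.mem_setOf_eq, Function.update_of_ne (by decide),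
          Function.update_of_ne (by decide)] at hR
        omega
    · rfl
  have z2 : (if h : 0 < y 2 then
      pathCount (insert y {x : Fin 4 → ℕ | (x 0 : ℤ) - (x 2 : ℤ) < (t : ℤ)}) (Pi.single 0 s)
        (Function.update y 2 (y 2 - 1)) else 0) = 0 := by
    clear z1
    split_ifs with h
    · apply pathCount_target_not_mem
      intro hmem
      rcases Set.mem_insert_iff.mp hmem with heq | hR
      · have := congrFun heq 2
        rw [Function.update_self] at this
        omega
      · rw [Set.mem_setOf_eq, Function.update_of_ne (by decide),
          Function.update_self] at hR
        omega
    · rfl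
  have z3 : (if h : 0 < y 3 then
      pathCount (insert y {x : Fin 4 → ℕ | (x 0 : ℤ) - (x 2 : ℤ) < (t : ℤ)}) (Pi.single 0 s)
        (Function.update y 3 (y 3 - 1)) else 0) = 0 := by
    clear z1 z2
    split_ifs with h
    · apply pathCount_target_not_mem
      intro hmem
      rcases Set.mem_insert_iff.mp hmem with heq | hR
      · have := congrFun heq 3
        rw [Function.update_self] at this
        omega
      · rw [Set.mem_setOf_eq, Function.update_of_ne (by decide),
          Function.update_of_ne (by decide)] at hR
        omega
    · rfl
  rw [z1, z2, z3, add_zero, add_zero, add_zero, dif_pos hy00,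
    pathCount_insert _ _ _ (sum_update_pred y 0 hy00)]
  have hu0 : Function.update y 0 (y 0 - 1) 0 = y 0 - 1 := Function.update_self _ _ _
  have hu1 : Function.update y 0 (y 0 - 1) 1 = y 1 := Function.update_of_ne (by decide) _ _
  have hu2 : Function.update y 0 (y 0 - 1) 2 = y 2 := Function.update_of_ne (by decide) _ _
  have hu3 : Function.update y 0 (y 0 - 1) 3 = y 3 := Function.update_of_ne (by decide) _ _
  have KEY := mainCount t s hst (Function.update y 0 (y 0 - 1))
    (by rw [hu0, hu2]; clear z1 z2 z3; omega)
  rw [hu0, hu1, hu2, hu3, if_pos hs1] at KEY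
  exact KEY


/-- For `b > 0` and a boundary point `y ∈ ℕ⁴` with
`y₁ - y₃ = b` and `n = y₁ + y₂ + y₃ + y₄`, with `k(y)` the number of paths from
the origin staying in `R = {x : x₁ - x₃ < b}` except at `y`, and `k₁*(y)` the
number of such paths from `e₁`, one has
`b·(n-1)·k₁*(y) = (b-1)·y₁·k(y)`, i.e. `k₁*(y)/k(y) = ((b-1)/b)·y₁/(n-1)`. -/
theorem estimator_count_identity_e1 (b : ℤ) (hb : 0 < b) (y : Fin 4 → ℕ)
    (hy : (y 0 : ℤ) - (y 2 : ℤ) = b) (n : ℕ) (hn : n = y 0 + y 1 + y 2 + y 3) :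
    b * ((n : ℤ) - 1) *
        (exitCount {x : Fin 4 → ℕ | (x 0 : ℤ) - (x 2 : ℤ) < b}
          (Pi.single 0 1) y : ℤ)
      = (b - 1) * (y 0 : ℤ) *
        (exitCount {x : Fin 4 → ℕ | (x 0 : ℤ) - (x 2 : ℤ) < b} 0 y : ℤ) := by

  obtain ⟨t, rfl⟩ : ∃ t : ℕ, b = (t : ℤ) := ⟨b.toNat, (Int.toNat_of_nonneg hb.le).symm⟩
  have ht1 : 1 ≤ t := by omega
  by_cases ht : t = 1
  · subst ht
    by_cases hy1 : y = Pi.single 0 1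
    · have hn1 : n = 1 := by
        subst hy1
        rw [hn, Pi.single_eq_same, Pi.single_eq_of_ne (by decide),
          Pi.single_eq_of_ne (by decide), Pi.single_eq_of_ne (by decide)]
        rfl
      rw [hn1]
      norm_num
    · have hk10 : exitCount {x : Fin 4 → ℕ | (x 0 : ℤ) - (x 2 : ℤ) < ((1 : ℕ) : ℤ)}
          (Pi.single 0 1) y = 0 := by
        rw [exitCount]
        apply pathCount_start_not_mem
        intro hmem
        rcases Set.mem_insert_iff.mp hmem with heq | hR
        · exact hy1 heq.symm
        · rw [Set.mem_setOf_eq, Pi.single_eq_same,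
            Pi.single_eq_of_ne (by decide)] at hR
          omega
      rw [hk10]
      push_cast
      ring
  · have ht2 : 2 ≤ t := by omega
    have hy0 : y 0 = y 2 + t := by omega
    have hmn : ((n - 1 : ℕ) : ℤ) = (n : ℤ) - 1 := by omega
    have hy01 : ((y 0 - 1 : ℕ) : ℤ) = (y 0 : ℤ) - 1 := by omega
    have hs1 : y 2 + t = y 0 := by omega
    have hs2 : y 0 - 1 - t = y 2 - 1 := by omega
    have hs3 : y 2 + (t - 1) = y 0 - 1 := by omega
    have hs4 : y 0 - 1 - 1 = y 0 - 2 := by omega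
    have hIff : (t ≤ y 0 - 1) ↔ (1 ≤ y 2) := by omega
    have h0t : 0 < t := by omega
    have h1t : 1 < t := by omega
    have h0y : 0 ≤ y 0 - 1 := Nat.zero_le _
    have h1y : 1 ≤ y 0 - 1 := by omega
    have habs1 : (n - 1) * M4 (y 0 - 2) (y 1) (y 2) (y 3)
        = (y 0 - 1) * M4 (y 0 - 1) (y 1) (y 2) (y 3) := by
      have h := absorb0 (a := y 0 - 1) (b := y 1) (c := y 2) (d := y 3) (by omega)
      rw [show (y 0 - 1) - 1 = y 0 - 2 by omega] at h
      rw [show n - 1 = (y 0 - 1) + y 1 + y 2 + y 3 by omega]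
      exact h
    by_cases h2 : 1 ≤ y 2
    · have habs2 : (n - 1) * M4 (y 0 - 1) (y 1) (y 2 - 1) (y 3)
          = y 2 * M4 (y 0 - 1) (y 1) (y 2) (y 3) := by
        have h := absorb2 (a := y 0 - 1) (b := y 1) (c := y 2) (d := y 3) h2
        rw [show n - 1 = (y 0 - 1) + y 1 + y 2 + y 3 by omega]
        exact h
      have habs3 : (n - 1) * M4 (y 0 - 1) (y 1) (y 2 - 1) (y 3)
          = y 0 * M4 (y 0) (y 1) (y 2 - 1) (y 3) := by
        have h := absorb0 (a := y 0) (b := y 1) (c := y 2 - 1) (d := y 3) (by omega)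
        rw [show n - 1 = y 0 + y 1 + (y 2 - 1) + y 3 by omega]
        exact h
      have Hk := exit_formula t 0 h0t y hy0 h0y
      have Hk1 := exit_formula t 1 h1t y hy0 h1y
      rw [Pi.single_zero, Nat.sub_zero, Nat.sub_zero] at Hk
      rw [hs1, hs2, if_congr hIff rfl rfl, if_pos h2] at Hk
      rw [hs3, hs2, hs4, if_congr hIff rfl rfl, if_pos h2] at Hk1
      zify at Hk Hk1 habs1 habs2 habs3
      simp only [hmn, hy01] at habs1 habs2 habs3
      linear_combination ((t : ℤ) * ((n : ℤ) - 1)) * Hk1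
        - (((t : ℤ) - 1) * (y 0 : ℤ)) * Hk + (t : ℤ) * habs1 - habs2
        - ((t : ℤ) - 1) * habs3 + (M4 (y 0 - 1) (y 1) (y 2) (y 3) : ℤ) * hy
    · have hZ2 : (y 2 : ℤ) = 0 := by omega
      have Hk := exit_formula t 0 h0t y hy0 h0y
      have Hk1 := exit_formula t 1 h1t y hy0 h1y
      rw [Pi.single_zero, Nat.sub_zero, Nat.sub_zero] at Hk
      rw [hs1, hs2, if_congr hIff rfl rfl, if_neg h2, add_zero] at Hk
      rw [hs3, hs2, hs4, if_congr hIff rfl rfl, if_neg h2, add_zero] at Hk1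
      zify at Hk Hk1 habs1
      simp only [hmn, hy01] at habs1
      linear_combination ((t : ℤ) * ((n : ℤ) - 1)) * Hk1
        - (((t : ℤ) - 1) * (y 0 : ℤ)) * Hk + (t : ℤ) * habs1
        + (M4 (y 0 - 1) (y 1) (y 2) (y 3) : ℤ) * hy
        + (M4 (y 0 - 1) (y 1) (y 2) (y 3) : ℤ) * hZ2
end

section
/- Let b > 0 and let y = (y_1, y_2, y_3, y_4) ∈ ℕ⁴ with y_1 - y_3 = b, and set n = y_1 + y_2 + y_3 + y_4. With k(y) the number of lattice paths from the origin to y all of whose points except y satisfy x_1 - x_3 < b, and k_2*(y) the number of such paths starting from e_2 = (0,1,0,0), the identity (n-1) · k_2*(y) = y_2 · k(y) holds; equivalently, k_2*(y)/k(y) = y_2/(n-1). -/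
open scoped Classical

section Aux
variable {k : ℕ}

lemma sum_update_sub (x : Fin k → ℕ) (i : Fin k) (hi : 0 < x i) :
    ∑ j, Function.update x i (x i - 1) j = (∑ j, x j) - 1 := by
  have h1 := Finset.sum_update_of_mem (Finset.mem_univ i) x (x i - 1)
  have h2 := Finset.sum_eq_sum_sdiff_singleton_add (Finset.mem_univ i) x
  omega

lemma sum_pos_of_pos (x : Fin k → ℕ) (i : Fin k) (hi : 0 < x i) : 0 < ∑ j, x j :=
  lt_of_lt_of_le hi (Finset.single_le_sum (fun _ _ => Nat.zero_le _) (Finset.mem_univ i))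

lemma pathCount_not_mem (A : Set (Fin k → ℕ)) (a x : Fin k → ℕ) (h : x ∉ A) :
    pathCount A a x = 0 := by
  rw [pathCount]
  by_cases hxa : x = a
  · rw [if_pos hxa, if_neg (hxa ▸ h)]
  · rw [if_neg hxa, if_neg h]

lemma pathCount_zero_of_lt (A : Set (Fin k → ℕ)) (a : Fin k → ℕ) (j : Fin k) :
    ∀ n (x : Fin k → ℕ), (∑ i, x i) = n → x j < a j → pathCount A a x = 0 := by
  intro n
  induction n using Nat.strong_induction_on with
  | _ n ih =>
    intro x hs hlt
    have hxa : x ≠ a := by rintro rfl; omega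
    rw [pathCount, if_neg hxa]
    by_cases hA : x ∈ A
    · rw [if_pos hA]
      refine Finset.sum_eq_zero fun i _ => ?_
      by_cases hi : 0 < x i
      · rw [dif_pos hi]
        have hpos := sum_pos_of_pos x i hi
        refine ih (n-1) (by omega) _ (by rw [sum_update_sub x i hi, hs]) ?_
        by_cases h : i = j
        · subst h; rw [Function.update_self]; omega
        · rw [Function.update_of_ne (fun hh => h hh.symm)]; exact hlt
      · rw [dif_neg hi]
    · rw [if_neg hA]
end Aux

section Aux2
variable {k : ℕ}

lemma pathCount_single_eq (A : Set (Fin k → ℕ)) (j : Fin k)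
    (hA : ∀ (x : Fin k → ℕ) (c : ℕ), Function.update x j c ∈ A ↔ x ∈ A) :
    ∀ n (x : Fin k → ℕ), (∑ i, x i) = n → 0 < x j →
      pathCount A (Pi.single j 1) x = pathCount A 0 (Function.update x j (x j - 1)) := by
  intro n
  induction n using Nat.strong_induction_on with
  | _ n ih =>
    intro x hs hxj
    by_cases hx : x = Pi.single j 1
    · subst hx
      have h0 : Function.update (Pi.single j 1 : Fin k → ℕ) j ((Pi.single j 1 : Fin k → ℕ) j - 1)
          = (0 : Fin k → ℕ) := by
        funext i
        by_cases hij : i = j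
        · subst hij; simp
        · simp [Function.update_of_ne hij, Pi.single_eq_of_ne hij]
      rw [h0, pathCount, if_pos rfl, pathCount, if_pos rfl]
      have hps : Function.update (0 : Fin k → ℕ) j 1 = Pi.single j 1 := by
        funext i
        by_cases hij : i = j
        · subst hij; simp
        · simp [Function.update_of_ne hij, Pi.single_eq_of_ne hij]
      have hiff := hA 0 1
      rw [hps] at hiff
      by_cases hmem : (0 : Fin k → ℕ) ∈ A
      · rw [if_pos hmem, if_pos (hiff.mpr hmem)]
      · rw [if_neg hmem, if_neg (fun hh => hmem (hiff.mp hh))]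
    · set x' := Function.update x j (x j - 1) with hx'def
      have hmem : x ∈ A ↔ x' ∈ A := (hA x (x j - 1)).symm
      by_cases hxA : x ∈ A
      · have hx'0 : x' ≠ (0 : Fin k → ℕ) := by
          intro h
          apply hx
          funext i
          by_cases hij : i = j
          · have hj := congrFun h j
            rw [hx'def, Function.update_self] at hj
            simp only [Pi.zero_apply] at hj
            rw [hij, Pi.single_eq_same]
            omega
          · have hi := congrFun h i
            rw [hx'def, Function.update_of_ne hij] at hi
            simp only [Pi.zero_apply] at hi
            rw [Pi.single_eq_of_ne hij]
            exact hi
        rw [pathCount, if_neg hx, if_pos hxA]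
        conv_rhs => rw [pathCount]
        rw [if_neg hx'0, if_pos (hmem.mp hxA)]
        have hn1 : 0 < n := hs ▸ sum_pos_of_pos x j hxj
        refine Finset.sum_congr rfl fun i _ => ?_
        by_cases hij : i = j
        · subst hij
          rw [dif_pos hxj]
          have hx'j : x' i = x i - 1 := Function.update_self _ _ _
          by_cases h2 : 0 < x i - 1
          · rw [dif_pos (show 0 < x' i by rw [hx'j]; exact h2)]
            exact ih (n-1) (by omega) x' (by rw [hx'def, sum_update_sub x i hxj, hs])
              (by rw [hx'j]; exact h2)
          · rw [dif_neg (show ¬ 0 < x' i by rw [hx'j]; exact h2)]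
            refine pathCount_zero_of_lt A _ i (n-1) x'
              (by rw [hx'def, sum_update_sub x i hxj, hs]) ?_
            rw [hx'j, Pi.single_eq_same]; omega
        · have hx'i : x' i = x i := Function.update_of_ne hij _ _
          by_cases hi : 0 < x i
          · rw [dif_pos hi, dif_pos (show 0 < x' i by rw [hx'i]; exact hi)]
            set w := Function.update x i (x i - 1) with hwdef
            have hwj : w j = x j := Function.update_of_ne (fun hh => hij hh.symm) _ _
            have hcomm : Function.update x' i (x' i - 1) = Function.update w j (w j - 1) := by
              rw [hx'i, hwj, hx'def, hwdef, Function.update_comm hij]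
            rw [hcomm]
            exact ih (n-1) (by omega) w (by rw [hwdef, sum_update_sub x i hi, hs])
              (by rw [hwj]; exact hxj)
          · rw [dif_neg hi, dif_neg (show ¬ 0 < x' i by rw [hx'i]; exact hi)]
      · rw [pathCount_not_mem _ _ _ hxA, pathCount_not_mem _ _ _ (fun h => hxA (hmem.mpr h))]

end Aux2

section Aux3
variable {k : ℕ}

lemma pathCount_key (A : Set (Fin k → ℕ)) (j : Fin k)
    (hA : ∀ (x : Fin k → ℕ) (c : ℕ), Function.update x j c ∈ A ↔ x ∈ A) :
    ∀ n (x : Fin k → ℕ), (∑ i, x i) = n → 0 < x j →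
      x j * pathCount A 0 x = n * pathCount A 0 (Function.update x j (x j - 1)) := by
  intro n
  induction n using Nat.strong_induction_on with
  | _ n ih =>
    intro x hs hxj
    set x' := Function.update x j (x j - 1) with hx'def
    have hmem : x ∈ A ↔ x' ∈ A := (hA x (x j - 1)).symm
    have hn1 : 0 < n := hs ▸ sum_pos_of_pos x j hxj
    have hx'j : x' j = x j - 1 := Function.update_self _ _ _
    have hsx' : ∑ i, x' i = n - 1 := by rw [hx'def, sum_update_sub x j hxj, hs]
    by_cases hxA : x ∈ A
    · have hx'A : x' ∈ A := hmem.mp hxA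
      have hxne0 : x ≠ (0 : Fin k → ℕ) := by
        intro h
        rw [h] at hxj
        simp at hxj
      by_cases hx'0 : x' = (0 : Fin k → ℕ)
      · -- x = e_j, n = 1
        have hn : n = 1 := by
          have := congrFun hx'0 j
          rw [hx'j] at this
          simp only [Pi.zero_apply] at this
          have h2 : ∑ i, x' i = 0 := by rw [hx'0]; simp
          omega
        have hxj1 : x j = 1 := by
          have := congrFun hx'0 j
          rw [hx'j] at this
          simp only [Pi.zero_apply] at this
          omega
        rw [hx'0, hn, hxj1, pathCount, if_neg hxne0, if_pos hxA]
        rw [Finset.sum_eq_single_of_mem j (Finset.mem_univ j) ?side]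
        · rw [dif_pos hxj, ← hx'def, hx'0]
        case side =>
          intro i _ hij
          have hxi : x i = 0 := by
            have := congrFun hx'0 i
            rw [hx'def, Function.update_of_ne hij] at this
            simpa using this
          rw [dif_neg (by omega)]
      · -- general case
        have hPx' : pathCount A 0 x' = ∑ i : Fin k,
            if h : 0 < x' i then pathCount A 0 (Function.update x' i (x' i - 1)) else 0 := by
          rw [pathCount, if_neg hx'0, if_pos hx'A]
        have hPx : pathCount A 0 x = ∑ i : Fin k,
            if h : 0 < x i then pathCount A 0 (Function.update x i (x i - 1)) else 0 := by
          rw [pathCount, if_neg hxne0, if_pos hxA]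
        set f : Fin k → ℕ := fun i =>
          if h : 0 < x i then pathCount A 0 (Function.update x i (x i - 1)) else 0 with hfdef
        set g : Fin k → ℕ := fun i =>
          if h : 0 < x' i then pathCount A 0 (Function.update x' i (x' i - 1)) else 0 with hgdef
        have hfj : f j = pathCount A 0 x' := by rw [hfdef]; simp only [dif_pos hxj]; rfl
        have hterm : ∀ i ∈ Finset.univ.erase j, x j * f i = (n-1) * g i := by
          intro i hi
          have hij : i ≠ j := Finset.ne_of_mem_erase hi
          by_cases hxi : 0 < x i
          · have hx'i : x' i = x i := Function.update_of_ne hij _ _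
            rw [hfdef, hgdef]
            simp only [dif_pos hxi, dif_pos (show 0 < x' i by rw [hx'i]; exact hxi)]
            set w := Function.update x i (x i - 1) with hwdef
            have hwj : w j = x j := Function.update_of_ne (fun hh => hij hh.symm) _ _
            have hcomm : Function.update x' i (x' i - 1) = Function.update w j (w j - 1) := by
              rw [hx'i, hwj, hx'def, hwdef, Function.update_comm hij]
            rw [hcomm, ← hwj]
            exact ih (n-1) (by omega) w (by rw [hwdef, sum_update_sub x i hxi, hs])
              (by rw [hwj]; exact hxj)
          · have hx'i : x' i = x i := Function.update_of_ne hij _ _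
            rw [hfdef, hgdef]
            simp only [dif_neg hxi, dif_neg (show ¬ 0 < x' i by rw [hx'i]; exact hxi)]
            simp
        have hjterm : x j * f j = f j + (n-1) * g j := by
          by_cases h2 : 0 < x j - 1
          · have hg : g j = pathCount A 0 (Function.update x' j (x' j - 1)) := by
              rw [hgdef]; simp only [dif_pos (show 0 < x' j by rw [hx'j]; exact h2)]
            have hkey := ih (n-1) (by omega) x' hsx' (by rw [hx'j]; exact h2)
            rw [hfj, hg, hx'j] at *
            have : x j * pathCount A 0 x' =
                pathCount A 0 x' + (x j - 1) * pathCount A 0 x' := by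
              have hx1 : x j = 1 + (x j - 1) := by omega
              calc x j * pathCount A 0 x' = (1 + (x j - 1)) * pathCount A 0 x' := by rw [← hx1]
                _ = pathCount A 0 x' + (x j - 1) * pathCount A 0 x' := by ring
            rw [this, hkey]
          · have hxj1 : x j = 1 := by omega
            have hg : g j = 0 := by
              rw [hgdef]; simp only [dif_neg (show ¬ 0 < x' j by rw [hx'j]; exact h2)]
            rw [hg, hxj1]
            ring
        -- assemble
        rw [hPx, hPx']
        have hsplit1 : ∑ i : Fin k, f i = (∑ i ∈ Finset.univ.erase j, f i) + f j :=
          (Finset.sum_erase_add _ _ (Finset.mem_univ j)).symm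
        have hsplit2 : ∑ i : Fin k, g i = (∑ i ∈ Finset.univ.erase j, g i) + g j :=
          (Finset.sum_erase_add _ _ (Finset.mem_univ j)).symm
        have hf : f j = (∑ i ∈ Finset.univ.erase j, g i) + g j := by
          rw [hfj, hPx', hsplit2]
        rw [hsplit1, hsplit2, Nat.mul_add, Finset.mul_sum,
          Finset.sum_congr rfl hterm, hjterm, hf, ← Finset.mul_sum]
        set m := n - 1 with hm
        rw [show n = m + 1 by omega]
        ring
    · rw [pathCount_not_mem _ _ _ hxA, pathCount_not_mem _ _ _ (fun h => hxA (hmem.mpr h))]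
      simp

end Aux3

section Aux4
variable {k : ℕ}

lemma pathCount_insert_eq (A : Set (Fin k → ℕ)) (y a : Fin k → ℕ) :
    ∀ n (x : Fin k → ℕ), (∑ i, x i) = n → n < ∑ i, y i →
      pathCount (insert y A) a x = pathCount A a x := by
  intro n
  induction n using Nat.strong_induction_on with
  | _ n ih =>
    intro x hs hny
    have hxy : x ≠ y := by rintro rfl; omega
    have hmem : x ∈ insert y A ↔ x ∈ A := by
      simp only [Set.mem_insert_iff, hxy, false_or]
    rw [pathCount]
    conv_rhs => rw [pathCount]
    by_cases hxa : x = a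
    · subst hxa
      rw [if_pos rfl, if_pos rfl]
      by_cases hA : x ∈ A
      · rw [if_pos (hmem.mpr hA), if_pos hA]
      · rw [if_neg (fun h => hA (hmem.mp h)), if_neg hA]
    · rw [if_neg hxa, if_neg hxa]
      by_cases hA : x ∈ A
      · rw [if_pos (hmem.mpr hA), if_pos hA]
        refine Finset.sum_congr rfl fun i _ => ?_
        by_cases hi : 0 < x i
        · rw [dif_pos hi, dif_pos hi]
          have hn1 : 0 < n := hs ▸ sum_pos_of_pos x i hi
          exact ih (n-1) (by omega) _ (by rw [sum_update_sub x i hi, hs]) (by omega)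
        · rw [dif_neg hi, dif_neg hi]
      · rw [if_neg (fun h => hA (hmem.mp h)), if_neg hA]

end Aux4

/-- For `b > 0` and a boundary point `y ∈ ℕ⁴` with
`y₁ - y₃ = b` and `n = y₁ + y₂ + y₃ + y₄`, with `k(y)` the number of paths from
the origin staying in `R = {x : x₁ - x₃ < b}` except at `y`, and `k₂*(y)` the
number of such paths from `e₂`, one has
`(n-1)·k₂*(y) = y₂·k(y)`, i.e. `k₂*(y)/k(y) = y₂/(n-1)`. -/
theorem estimator_count_identity_e2 (b : ℤ) (hb : 0 < b) (y : Fin 4 → ℕ)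
    (hy : (y 0 : ℤ) - (y 2 : ℤ) = b) (n : ℕ) (hn : n = y 0 + y 1 + y 2 + y 3) :
    ((n : ℤ) - 1) *
        (exitCount {x : Fin 4 → ℕ | (x 0 : ℤ) - (x 2 : ℤ) < b}
          (Pi.single 1 1) y : ℤ)
      = (y 1 : ℤ) *
        (exitCount {x : Fin 4 → ℕ | (x 0 : ℤ) - (x 2 : ℤ) < b} 0 y : ℤ) := by
  set R : Set (Fin 4 → ℕ) := {x : Fin 4 → ℕ | (x 0 : ℤ) - (x 2 : ℤ) < b} with hR
  have hRinv : ∀ (x : Fin 4 → ℕ) (c : ℕ), Function.update x 1 c ∈ R ↔ x ∈ R := by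
    intro x c
    have h0 : Function.update x 1 c 0 = x 0 := Function.update_of_ne (by decide) _ _
    have h2 : Function.update x 1 c 2 = x 2 := Function.update_of_ne (by decide) _ _
    simp only [hR, Set.mem_setOf_eq, h0, h2]
  have hy0 : 0 < y 0 := by omega
  have hsy : ∑ i, y i = n := by rw [Fin.sum_univ_four]; omega
  have hn1 : 0 < n := by omega
  have hyne0 : y ≠ (0 : Fin 4 → ℕ) := by
    intro h
    rw [h] at hy0
    simp at hy0
  have hynes : y ≠ Pi.single 1 1 := by
    intro h
    have h0 : y 0 = (Pi.single 1 1 : Fin 4 → ℕ) 0 := by rw [h]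
    rw [Pi.single_eq_of_ne (by decide)] at h0
    omega
  have hyA : y ∈ insert y R := Set.mem_insert _ _
  set w := Function.update y 0 (y 0 - 1) with hwdef
  have hsw : ∑ i, w i = n - 1 := by rw [hwdef, sum_update_sub y 0 hy0, hsy]
  have h1t : ∀ a : Fin 4 → ℕ,
      (if h : 0 < y 1 then pathCount (insert y R) a (Function.update y 1 (y 1 - 1)) else 0)
        = 0 := by
    intro a
    by_cases hyi : 0 < y 1
    · rw [dif_pos hyi, pathCount_insert_eq R y a (n-1) _
        (by rw [sum_update_sub y 1 hyi, hsy]) (by omega)]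
      apply pathCount_not_mem
      have e0 : Function.update y 1 (y 1 - 1) 0 = y 0 := Function.update_of_ne (by decide) _ _
      have e2 : Function.update y 1 (y 1 - 1) 2 = y 2 := Function.update_of_ne (by decide) _ _
      simp only [hR, Set.mem_setOf_eq, e0, e2]
      omega
    · rw [dif_neg hyi]
  have h2t : ∀ a : Fin 4 → ℕ,
      (if h : 0 < y 2 then pathCount (insert y R) a (Function.update y 2 (y 2 - 1)) else 0)
        = 0 := by
    intro a
    by_cases hyi : 0 < y 2
    · rw [dif_pos hyi, pathCount_insert_eq R y a (n-1) _
        (by rw [sum_update_sub y 2 hyi, hsy]) (by omega)]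
      apply pathCount_not_mem
      have e0 : Function.update y 2 (y 2 - 1) 0 = y 0 := Function.update_of_ne (by decide) _ _
      have e2 : Function.update y 2 (y 2 - 1) 2 = y 2 - 1 := Function.update_self _ _ _
      simp only [hR, Set.mem_setOf_eq, e0, e2]
      omega
    · rw [dif_neg hyi]
  have h3t : ∀ a : Fin 4 → ℕ,
      (if h : 0 < y 3 then pathCount (insert y R) a (Function.update y 3 (y 3 - 1)) else 0)
        = 0 := by
    intro a
    by_cases hyi : 0 < y 3
    · rw [dif_pos hyi, pathCount_insert_eq R y a (n-1) _
        (by rw [sum_update_sub y 3 hyi, hsy]) (by omega)]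
      apply pathCount_not_mem
      have e0 : Function.update y 3 (y 3 - 1) 0 = y 0 := Function.update_of_ne (by decide) _ _
      have e2 : Function.update y 3 (y 3 - 1) 2 = y 2 := Function.update_of_ne (by decide) _ _
      simp only [hR, Set.mem_setOf_eq, e0, e2]
      omega
    · rw [dif_neg hyi]
  have hterm : ∀ (a : Fin 4 → ℕ), ∀ i ∈ (Finset.univ : Finset (Fin 4)), i ≠ 0 →
      (if h : 0 < y i then pathCount (insert y R) a (Function.update y i (y i - 1)) else 0)
        = 0 := by
    intro a i _ hi
    fin_cases i
    · exact absurd rfl hi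
    · exact h1t a
    · exact h2t a
    · exact h3t a
  have hk : exitCount R 0 y = pathCount R 0 w := by
    rw [exitCount, pathCount, if_neg hyne0, if_pos hyA,
      Finset.sum_eq_single_of_mem 0 (Finset.mem_univ 0) (hterm 0),
      dif_pos hy0, ← hwdef, pathCount_insert_eq R y 0 (n-1) w hsw (by omega)]
  have hk2 : exitCount R (Pi.single 1 1) y = pathCount R (Pi.single 1 1) w := by
    rw [exitCount, pathCount, if_neg hynes, if_pos hyA,
      Finset.sum_eq_single_of_mem 0 (Finset.mem_univ 0) (hterm (Pi.single 1 1)),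
      dif_pos hy0, ← hwdef, pathCount_insert_eq R y (Pi.single 1 1) (n-1) w hsw (by omega)]
  rw [hk, hk2]
  have hw1 : w 1 = y 1 := Function.update_of_ne (by decide) _ _
  by_cases hy1 : 0 < y 1
  · have htr : pathCount R (Pi.single 1 1) w = pathCount R 0 (Function.update w 1 (w 1 - 1)) :=
      pathCount_single_eq R 1 hRinv (n-1) w hsw (by rw [hw1]; exact hy1)
    have hkey : w 1 * pathCount R 0 w
        = (n-1) * pathCount R 0 (Function.update w 1 (w 1 - 1)) :=
      pathCount_key R 1 hRinv (n-1) w hsw (by rw [hw1]; exact hy1)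
    rw [hw1] at hkey
    rw [htr]
    have hcast : ((n : ℤ) - 1) = ((n - 1 : ℕ) : ℤ) := by omega
    rw [hcast]
    exact_mod_cast hkey.symm
  · have hz : pathCount R (Pi.single 1 1) w = 0 := by
      refine pathCount_zero_of_lt R _ 1 (n-1) w hsw ?_
      rw [hw1, Pi.single_eq_same]
      omega
    rw [hz]
    have : y 1 = 0 := by omega
    rw [this]
    simp
end
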